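/- Assume 5 ≤ p ≤ q with q ≠ p+1, the sequence a is dominant, R⁺(a) = R⁻(a) ≤ p, and there exists an index s with 1 ≤ s ≤ p such that a_{p+1} > a_s > a_{p+q}. Then a_{p+1} > a_1, a_1 = a_2 = … = a_p = a_{p+2} = … = a_{p+q−1}, and a_{p+q−1} > a_{p+q}; in particular R⁺(a) = R⁻(a) = p. (This is the key uniqueness statement behind Theorem 1.2(2): among dominant parameters with R⁺ = R⁻ ≤ p that violate the discrete-decomposability condition, only the comparison pattern of λ = ε_{p+1} − ε_{p+q} can occur.) -/

import Mathlib

/-- The sequence `a` (with relevant indices `1, …, p+q`) is dominant: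
`a 1 ≥ a 2 ≥ … ≥ a p` and `a (p+1) ≥ a (p+2) ≥ … ≥ a (p+q)`. -/
def Dominant (p q : ℕ) (a : ℕ → ℝ) : Prop :=
  (∀ i j, 1 ≤ i → i ≤ j → j ≤ p → a j ≤ a i) ∧
  (∀ i j, p + 1 ≤ i → i ≤ j → j ≤ p + q → a j ≤ a i)

/-- `R⁺(a) = #{(i,j) : 1 ≤ i ≤ p, p+1 ≤ j ≤ p+q, a i > a j}`. -/
noncomputable def Rplus (p q : ℕ) (a : ℕ → ℝ) : ℕ :=
  ((Finset.Icc 1 p ×ˢ Finset.Icc (p + 1) (p + q)).filter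
    (fun ij => a ij.2 < a ij.1)).card

/-- `R⁻(a) = #{(i,j) : 1 ≤ i ≤ p, p+1 ≤ j ≤ p+q, a j > a i}`. -/
noncomputable def Rminus (p q : ℕ) (a : ℕ → ℝ) : ℕ :=
  ((Finset.Icc 1 p ×ˢ Finset.Icc (p + 1) (p + q)).filter
    (fun ij => a ij.1 < a ij.2)).card

noncomputable def cP (p : ℕ) (a : ℕ → ℝ) (j : ℕ) : ℕ :=
  ((Finset.Icc 1 p).filter fun i => a j < a i).card
noncomputable def cM (p : ℕ) (a : ℕ → ℝ) (j : ℕ) : ℕ :=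
  ((Finset.Icc 1 p).filter fun i => a i < a j).card
noncomputable def cE (p : ℕ) (a : ℕ → ℝ) (j : ℕ) : ℕ :=
  ((Finset.Icc 1 p).filter fun i => a i = a j).card

lemma cP_cM_cE (p : ℕ) (a : ℕ → ℝ) (j : ℕ) :
    cP p a j + cM p a j + cE p a j = p := by
  classical
  have h : cP p a j + cM p a j + cE p a j
      = ∑ i ∈ Finset.Icc 1 p, ((if a j < a i then 1 else 0)
        + (if a i < a j then 1 else 0) + (if a i = a j then 1 else 0)) := by
    unfold cP cM cE
    rw [Finset.card_filter, Finset.card_filter, Finset.card_filter,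
      ← Finset.sum_add_distrib, ← Finset.sum_add_distrib]
  have h2 : ∀ i ∈ Finset.Icc 1 p, ((if a j < a i then 1 else 0)
        + (if a i < a j then 1 else 0) + (if a i = a j then 1 else 0)) = 1 := by
    intro i _
    rcases lt_trichotomy (a i) (a j) with h1 | h1 | h1
    · simp [h1, h1.ne, not_lt.mpr h1.le]
    · simp [h1, lt_irrefl]
    · simp [h1, h1.ne', not_lt.mpr h1.le]
  rw [h, Finset.sum_congr rfl h2, Finset.sum_const, Nat.card_Icc, smul_eq_mul, mul_one]
  omega

lemma Rplus_eq (p q : ℕ) (a : ℕ → ℝ) :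
    Rplus p q a = ∑ j ∈ Finset.Icc (p+1) (p+q), cP p a j := by
  classical
  unfold Rplus cP
  rw [Finset.card_filter, Finset.sum_product]
  rw [Finset.sum_comm]
  exact Finset.sum_congr rfl fun j _ => (Finset.card_filter _ _).symm

lemma Rminus_eq (p q : ℕ) (a : ℕ → ℝ) :
    Rminus p q a = ∑ j ∈ Finset.Icc (p+1) (p+q), cM p a j := by
  classical
  unfold Rminus cM
  rw [Finset.card_filter, Finset.sum_product]
  rw [Finset.sum_comm]
  exact Finset.sum_congr rfl fun j _ => (Finset.card_filter _ _).symm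

lemma sum_split (p q : ℕ) (hq : 2 ≤ q) (f : ℕ → ℕ) :
    ∑ j ∈ Finset.Icc (p+1) (p+q), f j
      = f (p+1) + (∑ j ∈ Finset.Icc (p+2) (p+q-1), f j + f (p+q)) := by
  have h1 : (p+1) ∈ Finset.Icc (p+1) (p+q) := by
    simp
    omega
  rw [← Finset.add_sum_erase _ f h1]
  congr 1
  have h2 : (Finset.Icc (p+1) (p+q)).erase (p+1) = Finset.Icc (p+2) (p+q) := by
    rw [Finset.Icc_erase_left, ← Finset.Icc_add_one_left_eq_Ioc]; rfl
  rw [h2]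
  have h3 : (p+q) ∈ Finset.Icc (p+2) (p+q) := by simp; omega
  rw [← Finset.sum_erase_add _ f h3]
  congr 2
  rw [Finset.Icc_erase_right]
  have h4 : p + q = (p + q - 1) + 1 := by omega
  rw [h4, Finset.Ico_add_one_right_eq_Icc]
  congr 1

set_option maxHeartbeats 1000000 in
/-- key uniqueness statement behind Theorem 1.2(2). Under
`5 ≤ p ≤ q`, `q ≠ p+1`, a dominant sequence with `R⁺(a) = R⁻(a) ≤ p` admitting
an index `s` with `1 ≤ s ≤ p` and `a (p+1) > a s > a (p+q)` must satisfy
`a (p+1) > a 1 = a 2 = … = a p = a (p+2) = … = a (p+q-1) > a (p+q)`, and then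
`R⁺(a) = R⁻(a) = p`. -/
theorem uniqueness_case2 (p q : ℕ) (a : ℕ → ℝ)
    (hp : 5 ≤ p) (hpq : p ≤ q) (hq : q ≠ p + 1)
    (hdom : Dominant p q a)
    (hR : Rplus p q a = Rminus p q a) (hRp : Rminus p q a ≤ p)
    (hs : ∃ s, 1 ≤ s ∧ s ≤ p ∧ a s < a (p + 1) ∧ a (p + q) < a s) :
    a 1 < a (p + 1) ∧
    (∀ i, 1 ≤ i → i ≤ p → a i = a 1) ∧
    (∀ j, p + 2 ≤ j → j ≤ p + q - 1 → a j = a 1) ∧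
    a (p + q) < a (p + q - 1) ∧
    Rplus p q a = p ∧ Rminus p q a = p := by
  classical
  obtain ⟨hd1, hd2⟩ := hdom
  obtain ⟨s, hs1, hsp, hsu, hsl⟩ := hs
  have hq5 : 5 ≤ q := le_trans hp hpq
  have hp1J : (p+1) ∈ Finset.Icc (p+1) (p+q) := Finset.mem_Icc.mpr ⟨le_rfl, by omega⟩
  have hpqJ : (p+q) ∈ Finset.Icc (p+1) (p+q) := Finset.mem_Icc.mpr ⟨by omega, le_rfl⟩
  have hsI : s ∈ Finset.Icc 1 p := Finset.mem_Icc.mpr ⟨hs1, hsp⟩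
  -- total count identity
  have htot : Rplus p q a + Rminus p q a + ∑ j ∈ Finset.Icc (p+1) (p+q), cE p a j
      = p * q := by
    rw [Rplus_eq, Rminus_eq, ← Finset.sum_add_distrib, ← Finset.sum_add_distrib]
    rw [Finset.sum_congr rfl (fun j _ => cP_cM_cE p a j), Finset.sum_const, Nat.card_Icc,
      smul_eq_mul]
    have hc : p + q + 1 - (p + 1) = q := by omega
    rw [hc, Nat.mul_comm]
  have hE : p * q ≤ 2 * p + ∑ j ∈ Finset.Icc (p+1) (p+q), cE p a j := by omega
  have hEsplit := sum_split p q (by omega) (cE p a)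
  -- Step 1 : all rows are equal
  have hall : ∀ i, 1 ≤ i → i ≤ p → a i = a 1 := by
    by_contra hc
    push_neg at hc
    obtain ⟨i0, hi01, hi0p, hi0ne⟩ := hc
    have hap : a p < a 1 := by
      have h1 := hd1 1 i0 le_rfl hi01 hi0p
      have h2 := hd1 i0 p hi01 hi0p le_rfl
      exact lt_of_le_of_lt h2 (lt_of_le_of_ne h1 hi0ne)
    -- each column has cE ≤ p - 1
    have hcE : ∀ j : ℕ, cE p a j + 1 ≤ p := by
      intro j
      have hsub : (Finset.Icc 1 p).filter (fun i => a i = a j) ⊂ Finset.Icc 1 p := by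
        apply Finset.filter_ssubset.mpr
        rcases eq_or_ne (a j) (a 1) with h | h
        · exact ⟨p, Finset.mem_Icc.mpr ⟨by omega, le_rfl⟩, by rw [h]; exact ne_of_lt hap⟩
        · exact ⟨1, Finset.mem_Icc.mpr ⟨le_rfl, by omega⟩, fun hh => h hh.symm⟩
      have hlt := Finset.card_lt_card hsub
      rw [Nat.card_Icc] at hlt
      unfold cE
      omega
    -- e1 + e2 ≤ p - 1
    have he12 : cE p a (p+1) + cE p a (p+q) + 1 ≤ p := by
      set S1 := (Finset.Icc 1 p).filter (fun i => a i = a (p+1)) with hS1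
      set S2 := (Finset.Icc 1 p).filter (fun i => a i = a (p+q)) with hS2
      have hdisj : Disjoint S1 S2 := by
        rw [Finset.disjoint_left]
        intro x hx1 hx2
        rw [hS1, Finset.mem_filter] at hx1
        rw [hS2, Finset.mem_filter] at hx2
        have : a (p+1) = a (p+q) := hx1.2 ▸ hx2.2
        have : a (p+q) < a (p+1) := lt_trans hsl hsu
        linarith
      have hsub : S1 ∪ S2 ⊆ (Finset.Icc 1 p).erase s := by
        intro x hx
        rcases Finset.mem_union.mp hx with hx | hx
        · rw [hS1, Finset.mem_filter] at hx
          refine Finset.mem_erase.mpr ⟨?_, hx.1⟩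
          intro hxs; rw [hxs] at hx; exact absurd hx.2 (ne_of_lt hsu)
        · rw [hS2, Finset.mem_filter] at hx
          refine Finset.mem_erase.mpr ⟨?_, hx.1⟩
          intro hxs; rw [hxs] at hx; exact absurd hx.2 (ne_of_gt hsl)
      have h1 : S1.card + S2.card ≤ ((Finset.Icc 1 p).erase s).card := by
        rw [← Finset.card_union_of_disjoint hdisj]
        exact Finset.card_le_card hsub
      rw [Finset.card_erase_of_mem hsI, Nat.card_Icc] at h1
      unfold cE
      rw [← hS1, ← hS2]
      omega
    -- the middle block
    set C := (Finset.Icc (p+2) (p+q-1)).card with hCdef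
    have hC : C + 2 = q := by rw [hCdef, Nat.card_Icc]; omega
    -- q ≤ p + 1, hence q = p
    have hqp : q = p := by
      have hmid : (∑ j ∈ Finset.Icc (p+2) (p+q-1), cE p a j) + C ≤ C * p := by
        have h1 : ∑ j ∈ Finset.Icc (p+2) (p+q-1), (cE p a j + 1) ≤ C * p := by
          have := Finset.sum_le_card_nsmul (Finset.Icc (p+2) (p+q-1))
            (fun j => cE p a j + 1) p (fun j _ => hcE j)
          rwa [smul_eq_mul, ← hCdef] at this
        rw [Finset.sum_add_distrib, Finset.sum_const, smul_eq_mul, mul_one, ← hCdef] at h1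
        exact h1
      have hpqm : p * q = p * C + 2 * p := by rw [← hC]; ring
      have hE2 : p * q ≤ 2 * p + (cE p a (p+1)
          + (∑ j ∈ Finset.Icc (p+2) (p+q-1), cE p a j + cE p a (p+q))) := by
        rw [← hEsplit]; exact hE
      have hqle : q ≤ p + 1 := by
        have : C + 1 ≤ p := by linarith [hE2, hmid, he12, hpqm]
        omega
      omega
    -- now q = p ; find a middle column j0 with cE = p - 1
    have hex : ∃ j0 ∈ Finset.Icc (p+2) (p+q-1), p ≤ cE p a j0 + 1 := by
      by_contra hc2
      push_neg at hc2
      have hb : ∀ j ∈ Finset.Icc (p+2) (p+q-1), cE p a j + 2 ≤ p := by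
        intro j hj; have := hc2 j hj; omega
      have h1 : ∑ j ∈ Finset.Icc (p+2) (p+q-1), (cE p a j + 2) ≤ C * p := by
        have := Finset.sum_le_card_nsmul (Finset.Icc (p+2) (p+q-1))
          (fun j => cE p a j + 2) p hb
        rwa [smul_eq_mul, ← hCdef] at this
      rw [Finset.sum_add_distrib, Finset.sum_const, smul_eq_mul, ← hCdef] at h1
      have hpqm : p * q = p * C + 2 * p := by rw [← hC]; ring
      have hE2 : p * q ≤ 2 * p + (cE p a (p+1)
          + (∑ j ∈ Finset.Icc (p+2) (p+q-1), cE p a j + cE p a (p+q))) := by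
        rw [← hEsplit]; exact hE
      linarith [hE2, h1, he12, hpqm, hC, hp, hqp]
    obtain ⟨j0, hj0mem, hj0ge⟩ := hex
    rw [Finset.mem_Icc] at hj0mem
    have hj0eq : cE p a j0 + 1 = p := le_antisymm (hcE j0) hj0ge
    -- the exceptional row r
    have hScard : ((Finset.Icc 1 p).filter (fun i => a i = a j0)).card + 1 = p := hj0eq
    have hsd : ((Finset.Icc 1 p) \ (Finset.Icc 1 p).filter (fun i => a i = a j0)).card = 1 := by
      rw [Finset.card_sdiff_of_subset (Finset.filter_subset _ _), Nat.card_Icc]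
      omega
    obtain ⟨r, hr⟩ := Finset.card_eq_one.mp hsd
    have hrprop : r ∈ Finset.Icc 1 p ∧ ¬ a r = a j0 := by
      have hmem : r ∈ Finset.Icc 1 p \ (Finset.Icc 1 p).filter (fun i => a i = a j0) := by
        rw [hr]; exact Finset.mem_singleton_self r
      rw [Finset.mem_sdiff, Finset.mem_filter] at hmem
      exact ⟨hmem.1, fun h => hmem.2 ⟨hmem.1, h⟩⟩
    have hother : ∀ i, i ∈ Finset.Icc 1 p → i ≠ r → a i = a j0 := by
      intro i hi hir
      by_contra hne
      have hmem2 : i ∈ Finset.Icc 1 p \ (Finset.Icc 1 p).filter (fun i => a i = a j0) := by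
        rw [Finset.mem_sdiff, Finset.mem_filter]
        exact ⟨hi, fun h => hne h.2⟩
      rw [hr, Finset.mem_singleton] at hmem2
      exact hir hmem2
    have hwle : a j0 ≤ a (p+1) := hd2 (p+1) j0 le_rfl (by omega) (by omega)
    have hwge : a (p+q) ≤ a j0 := hd2 j0 (p+q) (by omega) (by omega) le_rfl
    rcases eq_or_lt_of_le hwle with hcase1 | hcase1
    · -- Case A : a j0 = a (p+1)
      have hsr : s = r := by
        by_contra hne
        have := hother s hsI hne
        rw [this, hcase1] at hsu
        exact lt_irrefl _ hsu
      have hrowsgt : ∀ i ∈ Finset.Icc 1 p, a (p+q) < a i := by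
        intro i hi
        rcases eq_or_ne i r with hir | hir
        · rw [hir, ← hsr]; exact hsl
        · rw [hother i hi hir, hcase1]
          exact lt_trans hsl hsu
      have hcPq : cP p a (p+q) = p := by
        unfold cP
        rw [Finset.filter_true_of_mem hrowsgt, Nat.card_Icc]
        omega
      have hRpl : p ≤ Rplus p q a := by
        rw [Rplus_eq]
        have := Finset.single_le_sum (f := cP p a)
          (fun j _ => Nat.zero_le _) hpqJ
        omega
      have hRmeq : Rminus p q a = p := by omega
      -- but Rminus ≤ q - 1 = p - 1
      have hcMle : ∀ j ∈ Finset.Icc (p+1) (p+q), cM p a j ≤ 1 := by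
        intro j hj
        rw [Finset.mem_Icc] at hj
        have hsub : (Finset.Icc 1 p).filter (fun i => a i < a j) ⊆ {r} := by
          intro i hi
          rw [Finset.mem_filter] at hi
          rw [Finset.mem_singleton]
          by_contra hir
          have h1 := hother i hi.1 hir
          have h2 : a j ≤ a (p+1) := hd2 (p+1) j le_rfl hj.1 hj.2
          rw [h1, hcase1] at hi
          exact absurd hi.2 (not_lt.mpr h2)
        have := Finset.card_le_card hsub
        rw [Finset.card_singleton] at this
        exact this
      have hcMq : cM p a (p+q) = 0 := by
        unfold cM
        rw [Finset.card_eq_zero, Finset.filter_eq_empty_iff]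
        intro i hi
        exact not_lt.mpr (le_of_lt (hrowsgt i hi))
      have hRmle : Rminus p q a ≤ q - 1 := by
        rw [Rminus_eq, ← Finset.add_sum_erase _ (cM p a) hpqJ, hcMq, zero_add]
        refine le_trans (Finset.sum_le_card_nsmul _ _ 1
          (fun j hj => hcMle j (Finset.mem_of_mem_erase hj))) ?_
        rw [smul_eq_mul, mul_one, Finset.card_erase_of_mem hpqJ, Nat.card_Icc]
        omega
      omega
    rcases eq_or_lt_of_le hwge with hcase2 | hcase2
    · -- Case B : a j0 = a (p+q)
      have hsr : s = r := by
        by_contra hne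
        have := hother s hsI hne
        rw [this, ← hcase2] at hsl
        exact lt_irrefl _ hsl
      have hrowslt : ∀ i ∈ Finset.Icc 1 p, a i < a (p+1) := by
        intro i hi
        rcases eq_or_ne i r with hir | hir
        · rw [hir, ← hsr]; exact hsu
        · rw [hother i hi hir, ← hcase2]
          exact lt_trans hsl hsu
      have hcMp1 : cM p a (p+1) = p := by
        unfold cM
        rw [Finset.filter_true_of_mem hrowslt, Nat.card_Icc]
        omega
      have hRml : p ≤ Rminus p q a := by
        rw [Rminus_eq]
        have := Finset.single_le_sum (f := cM p a)
          (fun j _ => Nat.zero_le _) hp1J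
        omega
      have hRpeq : Rplus p q a = p := by omega
      have hcPle : ∀ j ∈ Finset.Icc (p+1) (p+q), cP p a j ≤ 1 := by
        intro j hj
        rw [Finset.mem_Icc] at hj
        have hsub : (Finset.Icc 1 p).filter (fun i => a j < a i) ⊆ {r} := by
          intro i hi
          rw [Finset.mem_filter] at hi
          rw [Finset.mem_singleton]
          by_contra hir
          have h1 := hother i hi.1 hir
          have h2 : a (p+q) ≤ a j := hd2 j (p+q) hj.1 hj.2 le_rfl
          rw [h1, ← hcase2] at hi
          exact absurd hi.2 (not_lt.mpr h2)
        have := Finset.card_le_card hsub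
        rw [Finset.card_singleton] at this
        exact this
      have hcPp1 : cP p a (p+1) = 0 := by
        unfold cP
        rw [Finset.card_eq_zero, Finset.filter_eq_empty_iff]
        intro i hi
        exact not_lt.mpr (le_of_lt (hrowslt i hi))
      have hRple : Rplus p q a ≤ q - 1 := by
        rw [Rplus_eq, ← Finset.add_sum_erase _ (cP p a) hp1J, hcPp1, zero_add]
        refine le_trans (Finset.sum_le_card_nsmul _ _ 1
          (fun j hj => hcPle j (Finset.mem_of_mem_erase hj))) ?_
        rw [smul_eq_mul, mul_one, Finset.card_erase_of_mem hp1J, Nat.card_Icc]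
        omega
      omega
    · -- Case C : a (p+q) < a j0 < a (p+1)
      have he1 : cE p a (p+1) ≤ 1 := by
        have hsub : (Finset.Icc 1 p).filter (fun i => a i = a (p+1)) ⊆ {r} := by
          intro i hi
          rw [Finset.mem_filter] at hi
          rw [Finset.mem_singleton]
          by_contra hir
          have h1 := hother i hi.1 hir
          rw [h1] at hi
          exact absurd hi.2 (ne_of_lt hcase1)
        have := Finset.card_le_card hsub
        rw [Finset.card_singleton] at this
        exact this
      have he2 : cE p a (p+q) ≤ 1 := by
        have hsub : (Finset.Icc 1 p).filter (fun i => a i = a (p+q)) ⊆ {r} := by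
          intro i hi
          rw [Finset.mem_filter] at hi
          rw [Finset.mem_singleton]
          by_contra hir
          have h1 := hother i hi.1 hir
          rw [h1] at hi
          exact absurd hi.2 (ne_of_gt hcase2)
        have := Finset.card_le_card hsub
        rw [Finset.card_singleton] at this
        exact this
      have hmid : (∑ j ∈ Finset.Icc (p+2) (p+q-1), cE p a j) + C ≤ C * p := by
        have h1 : ∑ j ∈ Finset.Icc (p+2) (p+q-1), (cE p a j + 1) ≤ C * p := by
          have := Finset.sum_le_card_nsmul (Finset.Icc (p+2) (p+q-1))
            (fun j => cE p a j + 1) p (fun j _ => hcE j)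
          rwa [smul_eq_mul, ← hCdef] at this
        rw [Finset.sum_add_distrib, Finset.sum_const, smul_eq_mul, mul_one, ← hCdef] at h1
        exact h1
      have hpqm : p * q = p * C + 2 * p := by rw [← hC]; ring
      have hE2 : p * q ≤ 2 * p + (cE p a (p+1)
          + (∑ j ∈ Finset.Icc (p+2) (p+q-1), cE p a j + cE p a (p+q))) := by
        rw [← hEsplit]; exact hE
      linarith [hE2, hmid, he1, he2, hpqm, hC, hp, hqp]
  -- Step 2 : conclusions
  have hv1 : a 1 < a (p+1) := by rw [← hall s hs1 hsp]; exact hsu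
  have hv2 : a (p+q) < a 1 := by rw [← hall s hs1 hsp]; exact hsl
  have hrowslt : ∀ i ∈ Finset.Icc 1 p, a i < a (p+1) := by
    intro i hi
    rw [Finset.mem_Icc] at hi
    rw [hall i hi.1 hi.2]
    exact hv1
  have hcMp1 : cM p a (p+1) = p := by
    unfold cM
    rw [Finset.filter_true_of_mem hrowslt, Nat.card_Icc]
    omega
  have hRmeq : Rminus p q a = p := by
    have h1 : p ≤ Rminus p q a := by
      rw [Rminus_eq]
      have := Finset.single_le_sum (f := cM p a) (fun j _ => Nat.zero_le _) hp1J
      omega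
    omega
  have hRpeq : Rplus p q a = p := by omega
  have hmid : ∀ j, p + 2 ≤ j → j ≤ p + q - 1 → a j = a 1 := by
    intro j hj1 hj2
    have hjJ : j ∈ Finset.Icc (p+1) (p+q) := Finset.mem_Icc.mpr ⟨by omega, by omega⟩
    by_contra hne
    rcases lt_or_gt_of_ne hne with hlt | hgt
    · -- a j < a 1 : columns j and p+q both give cP = p
      have hjq : a (p+q) ≤ a j := hd2 j (p+q) (by omega) (by omega) le_rfl
      have hcPj : cP p a j = p := by
        unfold cP
        rw [Finset.filter_true_of_mem, Nat.card_Icc]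
        · omega
        · intro i hi
          rw [Finset.mem_Icc] at hi
          rw [hall i hi.1 hi.2]
          exact hlt
      have hcPq : cP p a (p+q) = p := by
        unfold cP
        rw [Finset.filter_true_of_mem, Nat.card_Icc]
        · omega
        · intro i hi
          rw [Finset.mem_Icc] at hi
          rw [hall i hi.1 hi.2]
          exact lt_of_le_of_lt hjq hlt
      have hpair : cP p a j + cP p a (p+q) ≤ Rplus p q a := by
        rw [Rplus_eq]
        have hsub2 : ({j, p+q} : Finset ℕ) ⊆ Finset.Icc (p+1) (p+q) := by
          intro x hx
          rcases Finset.mem_insert.mp hx with h | h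
          · rw [h]; exact hjJ
          · rw [Finset.mem_singleton.mp h]; exact hpqJ
        have := Finset.sum_le_sum_of_subset hsub2 (f := cP p a)
        rwa [Finset.sum_pair (show j ≠ p+q by omega)] at this
      omega
    · -- a 1 < a j : columns p+1 and j both give cM = p
      have hcMj : cM p a j = p := by
        unfold cM
        rw [Finset.filter_true_of_mem, Nat.card_Icc]
        · omega
        · intro i hi
          rw [Finset.mem_Icc] at hi
          rw [hall i hi.1 hi.2]
          exact hgt
      have hpair : cM p a (p+1) + cM p a j ≤ Rminus p q a := by
        rw [Rminus_eq]
        have hsub2 : ({p+1, j} : Finset ℕ) ⊆ Finset.Icc (p+1) (p+q) := by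
          intro x hx
          rcases Finset.mem_insert.mp hx with h | h
          · rw [h]; exact hp1J
          · rw [Finset.mem_singleton.mp h]; exact hjJ
        have := Finset.sum_le_sum_of_subset hsub2 (f := cM p a)
        rwa [Finset.sum_pair (show p+1 ≠ j by omega)] at this
      omega
  refine ⟨hv1, hall, hmid, ?_, hRpeq, hRmeq⟩
  rw [hmid (p+q-1) (by omega) le_rfl]
  exact hv2
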